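/- For natural numbers n, u, v with 1 ≤ u ≤ n-1 and 0 ≤ v ≤ 2(n-u), the number of quadruples (p,r,k,q) of natural numbers satisfying 0 ≤ p,r ≤ n-1, 0 ≤ k,q ≤ n-1-p-r, k+q = v, p+r = u-1 and p+r < n-1 equals u·(v+1) if v ≤ n-u, and equals u·(2(n-u)-v+1) if v > n-u. -/
import Mathlib


open Finset

lemma count_pairs (A m : ℕ) (hm : m ≤ 2 * A) :
    ((Finset.range (A+1) ×ˢ Finset.range (A+1)).filter
        (fun x : ℕ × ℕ => x.1 + x.2 = m)).card
      = if m ≤ A then m + 1 else 2 * A - m + 1 := by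
  have hset : ((Finset.range (A+1) ×ˢ Finset.range (A+1)).filter
        (fun x : ℕ × ℕ => x.1 + x.2 = m))
      = (Finset.Icc (m - A) (min m A)).image (fun k => (k, m - k)) := by
    ext ⟨k, q⟩
    simp only [Finset.mem_filter, Finset.mem_product, Finset.mem_range,
      Finset.mem_image, Finset.mem_Icc, Prod.mk.injEq]
    constructor
    · rintro ⟨⟨hk, hq⟩, hsum⟩
      exact ⟨k, ⟨by omega, by omega⟩, rfl, by omega⟩
    · rintro ⟨a, ⟨ha1, ha2⟩, rfl, rfl⟩
      refine ⟨⟨?_, ?_⟩, ?_⟩ <;> omega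
  rw [hset, Finset.card_image_of_injective _ (fun a b h => by
    simpa using congrArg Prod.fst h), Nat.card_Icc]
  split <;> omega

theorem count_quadruples (n u v : ℕ) (hu1 : 1 ≤ u) (hu2 : u ≤ n - 1)
    (hv : v ≤ 2 * (n - u)) :
    (((Finset.range n ×ˢ Finset.range n ×ˢ Finset.range n ×ˢ Finset.range n).filter
        (fun x : ℕ × ℕ × ℕ × ℕ =>
          x.1 ≤ n - 1 ∧ x.2.1 ≤ n - 1 ∧
          x.2.2.1 ≤ n - 1 - x.1 - x.2.1 ∧ x.2.2.2 ≤ n - 1 - x.1 - x.2.1 ∧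
          x.2.2.1 + x.2.2.2 = v ∧ x.1 + x.2.1 = u - 1 ∧ x.1 + x.2.1 < n - 1)).card)
      = (if v ≤ n - u then u * (v + 1) else u * (2 * (n - u) - v + 1)) := by
  have hn : 2 ≤ n := by omega
  set S := (Finset.range n ×ˢ Finset.range n).filter
      (fun x : ℕ × ℕ => x.1 + x.2 = u - 1) with hS
  set T := (Finset.range (n - u + 1) ×ˢ Finset.range (n - u + 1)).filter
      (fun x : ℕ × ℕ => x.1 + x.2 = v) with hT
  have hmain : ((Finset.range n ×ˢ Finset.range n ×ˢ Finset.range n ×ˢ Finset.range n).filter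
        (fun x : ℕ × ℕ × ℕ × ℕ =>
          x.1 ≤ n - 1 ∧ x.2.1 ≤ n - 1 ∧
          x.2.2.1 ≤ n - 1 - x.1 - x.2.1 ∧ x.2.2.2 ≤ n - 1 - x.1 - x.2.1 ∧
          x.2.2.1 + x.2.2.2 = v ∧ x.1 + x.2.1 = u - 1 ∧ x.1 + x.2.1 < n - 1))
      = (S ×ˢ T).image (fun y : (ℕ × ℕ) × (ℕ × ℕ) => (y.1.1, y.1.2, y.2.1, y.2.2)) := by
    ext ⟨p, r, k, q⟩
    simp only [Finset.mem_filter, Finset.mem_product, Finset.mem_range,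
      Finset.mem_image, hS, hT, Prod.mk.injEq]
    constructor
    · rintro ⟨⟨hp, hr, hk, hq⟩, h1, h2, h3, h4, h5, h6, h7⟩
      have hk' : k < n - u + 1 := by omega
      have hq' : q < n - u + 1 := by omega
      exact ⟨((p, r), (k, q)), ⟨⟨⟨hp, hr⟩, h6⟩, ⟨⟨hk', hq'⟩, h5⟩⟩, rfl, rfl, rfl, rfl⟩
    · rintro ⟨⟨⟨a, b⟩, ⟨c, d⟩⟩, ⟨⟨⟨h1, h2⟩, h3⟩, ⟨⟨h4, h5⟩, h6⟩⟩, rfl, rfl, rfl, rfl⟩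
      refine ⟨⟨h1, h2, ?_, ?_⟩, ?_, ?_, ?_, ?_, h6, h3, ?_⟩ <;> omega
  have hinj : Function.Injective
      (fun y : (ℕ × ℕ) × (ℕ × ℕ) => (y.1.1, y.1.2, y.2.1, y.2.2)) := by
    rintro ⟨⟨a1, a2⟩, a3, a4⟩ ⟨⟨b1, b2⟩, b3, b4⟩ h
    simp only [Prod.mk.injEq] at h ⊢
    exact ⟨⟨h.1, h.2.1⟩, h.2.2.1, h.2.2.2⟩
  rw [hmain, Finset.card_image_of_injective _ hinj, Finset.card_product]
  have hScard : S.card = u := by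
    have h1 : n = (n - 1) + 1 := by omega
    have := count_pairs (n - 1) (u - 1) (by omega)
    rw [hS, h1, this, if_pos (by omega)]
    omega
  have hTcard : T.card = if v ≤ n - u then v + 1 else 2 * (n - u) - v + 1 := by
    rw [hT, count_pairs (n - u) v hv]
  rw [hScard, hTcard]
  split <;> ring
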